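/- If a compactly supported integrable vector-valued function φ : ℝ → ℝ^r satisfies the two-direction refinement equation φ(x) = √d · Σ_k [P⁺_k φ(dx − k) + P⁻_k φ(k − dx)] (finite sum), then its j-th continuous moment m_j = ∫ x^j φ(x) dx satisfies m_j = d^{−j} Σ_{ℓ=0}^{j} C(j,ℓ) [M⁺_{j−ℓ} + (−1)^ℓ M⁻_{j−ℓ}] m_ℓ, where M⁺_i = (1/√d) Σ_k k^i P⁺_k and M⁻_i = (1/√d) Σ_k k^i P⁻_k. -/

import Mathlib

open MeasureTheory Finset

lemma auxP {r : ℕ} (φ : ℝ → Fin r → ℝ)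
    (hint : ∀ j : ℕ, Integrable (fun x : ℝ => x ^ j • φ x))
    {D : ℝ} (hD : 0 < D) (k : ℝ) (j : ℕ) :
    Integrable (fun x : ℝ => x ^ j • φ (D * x - k)) ∧
    (∫ x : ℝ, x ^ j • φ (D * x - k)) =
      ∑ ℓ ∈ Finset.range (j + 1),
        ((j.choose ℓ : ℝ) * k ^ (j - ℓ) / D ^ (j + 1)) • ∫ x : ℝ, x ^ ℓ • φ x := by
  have hDne : D ≠ 0 := hD.ne'
  set g : ℝ → Fin r → ℝ := fun y => ((y + k) / D) ^ j • φ y with hg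
  have hsm : ∀ (c : ℝ) (ℓ : ℕ), Integrable (fun y : ℝ => c • (y ^ ℓ • φ y)) :=
    fun c ℓ => (hint ℓ).smul c
  have hg_eq : g = fun y => ∑ ℓ ∈ Finset.range (j + 1),
      ((j.choose ℓ : ℝ) * k ^ (j - ℓ) / D ^ j) • (y ^ ℓ • φ y) := by
    funext y
    show ((y + k) / D) ^ j • φ y = _
    have hb : ((y + k) / D) ^ j
        = ∑ ℓ ∈ Finset.range (j + 1), (j.choose ℓ : ℝ) * k ^ (j - ℓ) / D ^ j * y ^ ℓ := by
      rw [div_pow, add_pow, Finset.sum_div]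
      refine Finset.sum_congr rfl fun ℓ _ => ?_
      ring
    rw [hb, Finset.sum_smul]
    refine Finset.sum_congr rfl fun ℓ _ => ?_
    rw [smul_smul]
  have hgint : Integrable g := by
    rw [hg_eq]
    exact integrable_finset_sum _ fun ℓ _ => hsm _ ℓ
  have hIg : (∫ y : ℝ, g y) = ∑ ℓ ∈ Finset.range (j + 1),
      ((j.choose ℓ : ℝ) * k ^ (j - ℓ) / D ^ j) • ∫ x : ℝ, x ^ ℓ • φ x := by
    rw [hg_eq, integral_finset_sum _ fun ℓ _ => hsm _ ℓ]
    refine Finset.sum_congr rfl fun ℓ _ => ?_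
    exact integral_smul _ _
  have h1 : (fun x : ℝ => x ^ j • φ (D * x - k)) = fun x => g (D * x - k) := by
    funext x
    rw [hg]
    congr 1
    simp only [sub_add_cancel, mul_div_cancel_left₀ x hDne]
  constructor
  · rw [h1]
    exact (hgint.comp_sub_right k).comp_mul_left' hDne
  rw [h1]
  have h2 : (∫ x : ℝ, g (D * x - k)) = |D⁻¹| • ∫ y : ℝ, g (y - k) :=
    MeasureTheory.Measure.integral_comp_mul_left (fun y => g (y - k)) D
  rw [h2, integral_sub_right_eq_self g k, hIg, Finset.smul_sum]
  refine Finset.sum_congr rfl fun ℓ _ => ?_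
  rw [smul_smul]
  congr 1
  rw [abs_of_pos (inv_pos.mpr hD), pow_succ]
  rw [div_eq_mul_inv, div_eq_mul_inv, mul_inv]
  ring

lemma auxM {r : ℕ} (φ : ℝ → Fin r → ℝ)
    (hint : ∀ j : ℕ, Integrable (fun x : ℝ => x ^ j • φ x))
    {D : ℝ} (hD : 0 < D) (k : ℝ) (j : ℕ) :
    Integrable (fun x : ℝ => x ^ j • φ (k - D * x)) ∧
    (∫ x : ℝ, x ^ j • φ (k - D * x)) =
      ∑ ℓ ∈ Finset.range (j + 1),
        ((-1 : ℝ) ^ ℓ * (j.choose ℓ : ℝ) * k ^ (j - ℓ) / D ^ (j + 1)) • ∫ x : ℝ, x ^ ℓ • φ x := by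
  have hDne : D ≠ 0 := hD.ne'
  set g : ℝ → Fin r → ℝ := fun y => ((k - y) / D) ^ j • φ y with hg
  have hsm : ∀ (c : ℝ) (ℓ : ℕ), Integrable (fun y : ℝ => c • (y ^ ℓ • φ y)) :=
    fun c ℓ => (hint ℓ).smul c
  have hg_eq : g = fun y => ∑ ℓ ∈ Finset.range (j + 1),
      ((-1 : ℝ) ^ ℓ * (j.choose ℓ : ℝ) * k ^ (j - ℓ) / D ^ j) • (y ^ ℓ • φ y) := by
    funext y
    show ((k - y) / D) ^ j • φ y = _
    have hb : ((k - y) / D) ^ j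
        = ∑ ℓ ∈ Finset.range (j + 1),
            (-1 : ℝ) ^ ℓ * (j.choose ℓ : ℝ) * k ^ (j - ℓ) / D ^ j * y ^ ℓ := by
      have h0 : k - y = -y + k := by ring
      rw [div_pow, h0, add_pow, Finset.sum_div]
      refine Finset.sum_congr rfl fun ℓ _ => ?_
      rw [neg_pow]
      ring
    rw [hb, Finset.sum_smul]
    refine Finset.sum_congr rfl fun ℓ _ => ?_
    rw [smul_smul]
  have hgint : Integrable g := by
    rw [hg_eq]
    exact integrable_finset_sum _ fun ℓ _ => hsm _ ℓ
  have hIg : (∫ y : ℝ, g y) = ∑ ℓ ∈ Finset.range (j + 1),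
      ((-1 : ℝ) ^ ℓ * (j.choose ℓ : ℝ) * k ^ (j - ℓ) / D ^ j) • ∫ x : ℝ, x ^ ℓ • φ x := by
    rw [hg_eq, integral_finset_sum _ fun ℓ _ => hsm _ ℓ]
    refine Finset.sum_congr rfl fun ℓ _ => ?_
    exact integral_smul _ _
  have h1 : (fun x : ℝ => x ^ j • φ (k - D * x)) = fun x => g (k - D * x) := by
    funext x
    rw [hg]
    congr 1
    simp only [sub_sub_cancel, mul_div_cancel_left₀ x hDne]
  constructor
  · rw [h1]
    exact (hgint.comp_sub_left k).comp_mul_left' hDne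
  rw [h1]
  have h2 : (∫ x : ℝ, g (k - D * x)) = |D⁻¹| • ∫ y : ℝ, g (k - y) :=
    MeasureTheory.Measure.integral_comp_mul_left (fun y => g (k - y)) D
  rw [h2, integral_sub_left_eq_self g _ k, hIg, Finset.smul_sum]
  refine Finset.sum_congr rfl fun ℓ _ => ?_
  rw [smul_smul]
  congr 1
  rw [abs_of_pos (inv_pos.mpr hD), pow_succ]
  rw [div_eq_mul_inv, div_eq_mul_inv, mul_inv]
  ring

lemma sum_mulVec' {ι : Type*} {r : ℕ} (s : Finset ι) (f : ι → Matrix (Fin r) (Fin r) ℝ)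
    (v : Fin r → ℝ) :
    (∑ k ∈ s, f k).mulVec v = ∑ k ∈ s, (f k).mulVec v := by
  classical
  induction s using Finset.induction with
  | empty => simp [Matrix.mulVec, dotProduct]
  | insert _ _ h ih => rw [Finset.sum_insert h, Finset.sum_insert h, Matrix.add_mulVec, ih]

/-- Moment recursion (by separation) for a two-direction multiscaling function. -/
theorem stmt_0 (d r : ℕ) (hd : 2 ≤ d) (hr : 1 ≤ r)
    (s : Finset ℤ)
    (Pp Pm : ℤ → Matrix (Fin r) (Fin r) ℝ)
    (hsupp : ∀ k : ℤ, k ∉ s → Pp k = 0 ∧ Pm k = 0)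
    (φ : ℝ → Fin r → ℝ)
    (hcpt : HasCompactSupport φ)
    (hint : ∀ j : ℕ, Integrable (fun x : ℝ => x ^ j • φ x))
    (href : ∀ x : ℝ, φ x =
      Real.sqrt d • ∑ k ∈ s,
        ((Pp k).mulVec (φ (d * x - k)) + (Pm k).mulVec (φ (k - d * x))))
    (m : ℕ → Fin r → ℝ)
    (hm : ∀ j : ℕ, m j = ∫ x : ℝ, x ^ j • φ x)
    (Mp Mm : ℕ → Matrix (Fin r) (Fin r) ℝ)
    (hMp : ∀ i : ℕ, Mp i = (Real.sqrt d)⁻¹ • ∑ k ∈ s, ((k : ℝ) ^ i) • Pp k)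
    (hMm : ∀ i : ℕ, Mm i = (Real.sqrt d)⁻¹ • ∑ k ∈ s, ((k : ℝ) ^ i) • Pm k) :
    ∀ j : ℕ, m j = ((d : ℝ) ^ j)⁻¹ •
      ∑ ℓ ∈ Finset.range (j + 1),
        (j.choose ℓ : ℝ) •
          (Mp (j - ℓ) + ((-1 : ℝ) ^ ℓ) • Mm (j - ℓ)).mulVec (m ℓ) := by
  intro j
  have hD : (0 : ℝ) < (d : ℝ) := by
    have h2 : (2 : ℝ) ≤ (d : ℝ) := by exact_mod_cast hd
    linarith
  set D : ℝ := (d : ℝ) with hDdef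
  have hDne : D ≠ 0 := hD.ne'
  have hsq : Real.sqrt D * Real.sqrt D = D := Real.mul_self_sqrt hD.le
  have hsne : Real.sqrt D ≠ 0 := ne_of_gt (Real.sqrt_pos.mpr hD)
  set Lp : ℤ → ((Fin r → ℝ) →L[ℝ] (Fin r → ℝ)) :=
    fun k => LinearMap.toContinuousLinearMap ((Pp k).mulVecLin) with hLpdef
  set Lm : ℤ → ((Fin r → ℝ) →L[ℝ] (Fin r → ℝ)) :=
    fun k => LinearMap.toContinuousLinearMap ((Pm k).mulVecLin) with hLmdef
  have hLp : ∀ (k : ℤ) (v : Fin r → ℝ), Lp k v = (Pp k).mulVec v := fun k v => rfl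
  have hLm : ∀ (k : ℤ) (v : Fin r → ℝ), Lm k v = (Pm k).mulVec v := fun k v => rfl
  have hfP : ∀ k : ℤ, Integrable (fun x : ℝ => x ^ j • φ (D * x - (k : ℝ))) :=
    fun k => (auxP φ hint hD k j).1
  have hfM : ∀ k : ℤ, Integrable (fun x : ℝ => x ^ j • φ ((k : ℝ) - D * x)) :=
    fun k => (auxM φ hint hD k j).1
  have key : ∀ x : ℝ, x ^ j • φ x
      = Real.sqrt D • ∑ k ∈ s,
          (Lp k (x ^ j • φ (D * x - k)) + Lm k (x ^ j • φ ((k : ℝ) - D * x))) := by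
    intro x
    rw [href x, smul_comm (x ^ j) (Real.sqrt D), Finset.smul_sum]
    refine congrArg _ (Finset.sum_congr rfl fun k _ => ?_)
    rw [hLp, hLm, Matrix.mulVec_smul, Matrix.mulVec_smul, smul_add]
  have hterm : ∀ k ∈ s, Integrable (fun x : ℝ =>
      Lp k (x ^ j • φ (D * x - (k : ℝ))) + Lm k (x ^ j • φ ((k : ℝ) - D * x))) :=
    fun k _ => ((Lp k).integrable_comp (hfP k)).add ((Lm k).integrable_comp (hfM k))
  have h3 : m j = Real.sqrt D • ∑ k ∈ s,
      (Lp k (∫ x : ℝ, x ^ j • φ (D * x - (k : ℝ)))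
        + Lm k (∫ x : ℝ, x ^ j • φ ((k : ℝ) - D * x))) := by
    rw [hm j, show (fun x : ℝ => x ^ j • φ x) = fun x : ℝ => Real.sqrt D • ∑ k ∈ s,
        (Lp k (x ^ j • φ (D * x - (k : ℝ))) + Lm k (x ^ j • φ ((k : ℝ) - D * x)))
      from funext key]
    rw [integral_smul, integral_finset_sum _ hterm]
    refine congrArg _ (Finset.sum_congr rfl fun k hk => ?_)
    rw [integral_add ((Lp k).integrable_comp (hfP k)) ((Lm k).integrable_comp (hfM k)),
      (Lp k).integral_comp_comm (hfP k), (Lm k).integral_comp_comm (hfM k)]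
  have h4 : m j = Real.sqrt D • ∑ k ∈ s, ∑ ℓ ∈ Finset.range (j + 1),
      (((j.choose ℓ : ℝ) * (k : ℝ) ^ (j - ℓ) / D ^ (j + 1)) • (Pp k).mulVec (m ℓ)
        + ((-1 : ℝ) ^ ℓ * (j.choose ℓ : ℝ) * (k : ℝ) ^ (j - ℓ) / D ^ (j + 1)) •
            (Pm k).mulVec (m ℓ)) := by
    rw [h3]
    refine congrArg _ (Finset.sum_congr rfl fun k hk => ?_)
    rw [(auxP φ hint hD k j).2, (auxM φ hint hD k j).2, map_sum, map_sum,
      ← Finset.sum_add_distrib]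
    refine Finset.sum_congr rfl fun ℓ _ => ?_
    rw [_root_.map_smul, _root_.map_smul, hLp, hLm, ← hm ℓ]
  rw [h4, Finset.sum_comm]
  simp only [hMp, hMm, Matrix.add_mulVec, Matrix.smul_mulVec, sum_mulVec',
    Finset.smul_sum, smul_add, smul_smul, ← Finset.sum_add_distrib]
  refine Finset.sum_congr rfl fun ℓ hℓ => Finset.sum_congr rfl fun k hk => ?_
  have hsds : (Real.sqrt D)⁻¹ = Real.sqrt D / D := by
    rw [eq_div_iff hDne, inv_mul_eq_iff_eq_mul₀ hsne, hsq]
  congr 1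
  · congr 1
    rw [hsds]
    field_simp
    ring
  · congr 1
    rw [hsds]
    field_simp
    ring
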